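/- Let (R, m) be a Noetherian local ring, I a nonzero proper ideal of R, a, b ∈ R, and M the maximal ideal of R(I)_{a,b}. Then for every n ≥ 1 one has M^n = m^n ⊕ m^{n-1}I as R-submodules of R(I)_{a,b} = R ⊕ I; consequently the M-adic topology on R(I)_{a,b} coincides with the m-adic topology of R(I)_{a,b} as an R-module, and the M-adic completion of R(I)_{a,b} is isomorphic as a ring to R̂(Î)_{a,b}, where R̂ is the m-adic completion of R and Î = I R̂. -/

import Mathlib

open IsLocalRing

universe u

/-! ### The family of rings `R(I)_{a,b}`

`RIab R I a b` is the quotient of the Rees algebra `⊕ₙ Iⁿtⁿ` by the contraction of the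
ideal generated by `t² + a t + b`.  As an `R`-module it is `R ⊕ I`; we realize it as the
type of pairs `r + i t` with `r ∈ R`, `i ∈ I`, with multiplication
`(r + i t)(s + j t) = (r s - b i j) + (r j + s i - a i j) t`. -/
@[ext]
structure RIab (R : Type u) [CommRing R] (I : Ideal R) (a b : R) : Type u where
  r : R
  i : R
  hi : i ∈ I

namespace RIab

variable {R : Type u} [CommRing R] {I : Ideal R} {a b : R}

instance : Zero (RIab R I a b) := ⟨⟨0, 0, I.zero_mem⟩⟩
instance : One (RIab R I a b) := ⟨⟨1, 0, I.zero_mem⟩⟩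
instance : Add (RIab R I a b) := ⟨fun x y => ⟨x.r + y.r, x.i + y.i, I.add_mem x.hi y.hi⟩⟩
instance : Neg (RIab R I a b) := ⟨fun x => ⟨-x.r, -x.i, I.neg_mem x.hi⟩⟩
instance : Mul (RIab R I a b) :=
  ⟨fun x y => ⟨x.r * y.r - b * (x.i * y.i),
    x.r * y.i + y.r * x.i - a * (x.i * y.i),
    I.sub_mem (I.add_mem (I.mul_mem_left _ y.hi) (I.mul_mem_left _ x.hi))
      (I.mul_mem_left _ (I.mul_mem_left _ y.hi))⟩⟩

@[simp] lemma zero_r : (0 : RIab R I a b).r = 0 := rfl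
@[simp] lemma zero_i : (0 : RIab R I a b).i = 0 := rfl
@[simp] lemma one_r : (1 : RIab R I a b).r = 1 := rfl
@[simp] lemma one_i : (1 : RIab R I a b).i = 0 := rfl
@[simp] lemma add_r (x y : RIab R I a b) : (x + y).r = x.r + y.r := rfl
@[simp] lemma add_i (x y : RIab R I a b) : (x + y).i = x.i + y.i := rfl
@[simp] lemma neg_r (x : RIab R I a b) : (-x).r = -x.r := rfl
@[simp] lemma neg_i (x : RIab R I a b) : (-x).i = -x.i := rfl
@[simp] lemma mul_r (x y : RIab R I a b) : (x * y).r = x.r * y.r - b * (x.i * y.i) := rfl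
@[simp] lemma mul_i (x y : RIab R I a b) :
    (x * y).i = x.r * y.i + y.r * x.i - a * (x.i * y.i) := rfl

instance instCommRing : CommRing (RIab R I a b) where
  add_assoc x y z := by ext <;> simp <;> ring
  zero_add x := by ext <;> simp
  add_zero x := by ext <;> simp
  add_comm x y := by ext <;> simp <;> ring
  neg_add_cancel x := by ext <;> simp
  mul_assoc x y z := by ext <;> simp <;> ring
  one_mul x := by ext <;> simp
  mul_one x := by ext <;> simp
  left_distrib x y z := by ext <;> simp <;> ring
  right_distrib x y z := by ext <;> simp <;> ring
  zero_mul x := by ext <;> simp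
  mul_zero x := by ext <;> simp
  mul_comm x y := by ext <;> simp <;> ring
  nsmul := nsmulRec
  zsmul := zsmulRec

/-- The canonical ring homomorphism `R → R(I)_{a,b}`, `r ↦ r + 0·t`. -/
def C : R →+* RIab R I a b where
  toFun r := ⟨r, 0, I.zero_mem⟩
  map_one' := rfl
  map_mul' x y := by ext <;> simp
  map_zero' := rfl
  map_add' x y := by ext <;> simp

instance instAlgebra : Algebra R (RIab R I a b) := (C (I := I) (a := a) (b := b)).toAlgebra

@[simp] lemma algebraMap_r (c : R) : (algebraMap R (RIab R I a b) c).r = c := rfl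
@[simp] lemma algebraMap_i (c : R) : (algebraMap R (RIab R I a b) c).i = 0 := rfl

instance [Nontrivial R] : Nontrivial (RIab R I a b) :=
  ⟨⟨0, 1, fun h => zero_ne_one (congrArg RIab.r h)⟩⟩

variable [IsLocalRing R]

lemma isUnit_of_isUnit_r (hI : I ≠ ⊤) {x : RIab R I a b} (hx : IsUnit x.r) : IsUnit x := by
  have hiI : x.i ∈ maximalIdeal R := le_maximalIdeal hI x.hi
  have hdet : IsUnit (x.r * x.r - a * x.r * x.i + b * (x.i * x.i)) := by
    by_contra h
    have hmem : x.r * x.r - a * x.r * x.i + b * (x.i * x.i) ∈ maximalIdeal R := by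
      rwa [IsLocalRing.mem_maximalIdeal, mem_nonunits_iff]
    have : x.r * x.r ∈ maximalIdeal R := by
      have := (maximalIdeal R).add_mem hmem
        ((maximalIdeal R).sub_mem
          ((maximalIdeal R).mul_mem_left (a * x.r) hiI)
          ((maximalIdeal R).mul_mem_left (b * x.i) hiI))
      have h2 : x.r * x.r - a * x.r * x.i + b * (x.i * x.i) +
          (a * x.r * x.i - b * x.i * x.i) = x.r * x.r := by ring
      rwa [h2] at this
    exact (IsLocalRing.mem_maximalIdeal _).mp this (hx.mul hx)
  obtain ⟨v, hv⟩ := hdet.exists_left_inv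
  refine IsUnit.of_mul_eq_one (a := x) ⟨v * (x.r - a * x.i), v * (-x.i),
    I.mul_mem_left _ (I.neg_mem x.hi)⟩ ?_
  ext
  · show x.r * (v * (x.r - a * x.i)) - b * (x.i * (v * (-x.i))) = 1
    linear_combination hv
  · show x.r * (v * (-x.i)) + v * (x.r - a * x.i) * x.i - a * (x.i * (v * (-x.i))) = 0
    ring

instance instIsLocalRing [Fact (I ≠ ⊤)] : IsLocalRing (RIab R I a b) := by
  refine IsLocalRing.of_isUnit_or_isUnit_one_sub_self fun x => ?_
  by_cases hx : IsUnit x.r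
  · exact Or.inl (isUnit_of_isUnit_r Fact.out hx)
  · refine Or.inr (isUnit_of_isUnit_r Fact.out ?_)
    have hxm : x.r ∈ maximalIdeal R := by rwa [IsLocalRing.mem_maximalIdeal, mem_nonunits_iff]
    show IsUnit (1 - x).r
    have : (1 - x).r = 1 - x.r := by
      show (1 + -x).r = 1 - x.r
      simp; ring
    rw [this]
    by_contra h
    have : (1 : R) ∈ maximalIdeal R := by
      have h1 : 1 - x.r ∈ maximalIdeal R := by
        rwa [IsLocalRing.mem_maximalIdeal, mem_nonunits_iff]
      have := (maximalIdeal R).add_mem h1 hxm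
      simpa using this
    exact (maximalIdeal.isMaximal R).ne_top ((Ideal.eq_top_iff_one _).mpr this)

lemma mem_maximalIdeal_iff [Fact (I ≠ ⊤)] (x : RIab R I a b) :
    x ∈ maximalIdeal (RIab R I a b) ↔ x.r ∈ maximalIdeal R := by
  constructor
  · intro hx
    rw [IsLocalRing.mem_maximalIdeal, mem_nonunits_iff] at hx ⊢
    intro hr
    exact hx (isUnit_of_isUnit_r Fact.out hr)
  · intro hx
    rw [IsLocalRing.mem_maximalIdeal, mem_nonunits_iff] at hx ⊢
    intro hu
    obtain ⟨y, hy⟩ := hu.exists_right_inv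
    refine hx ?_
    have h1 : x.r * y.r - b * (x.i * y.i) = 1 := congrArg RIab.r hy
    have hIm : x.i * y.i ∈ maximalIdeal R :=
      le_maximalIdeal Fact.out (I.mul_mem_right _ x.hi)
    by_contra h
    have hxm : x.r ∈ maximalIdeal R := by rwa [IsLocalRing.mem_maximalIdeal, mem_nonunits_iff]
    have : (1 : R) ∈ maximalIdeal R := by
      rw [← h1]
      exact (maximalIdeal R).sub_mem ((maximalIdeal R).mul_mem_right _ hxm)
        ((maximalIdeal R).mul_mem_left _ hIm)
    exact (maximalIdeal.isMaximal R).ne_top ((Ideal.eq_top_iff_one _).mpr this)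

lemma algebraMap_mem_nonZeroDivisors {u : R} (hu : u ∈ nonZeroDivisors R) :
    algebraMap R (RIab R I a b) u ∈ nonZeroDivisors (RIab R I a b) := by
  rw [mem_nonZeroDivisors_iff_right] at hu ⊢
  intro x hx
  have h1 : x.r * u - b * (x.i * 0) = 0 := congrArg RIab.r hx
  have h2 : x.r * 0 + u * x.i - a * (x.i * 0) = 0 := congrArg RIab.i hx
  simp only [mul_zero, sub_zero, zero_add] at h1 h2
  rw [mul_comm] at h2
  ext
  · exact hu _ h1
  · exact hu _ h2

/-- The induced homomorphism between total quotient rings `Q(R) → Q(R(I)_{a,b})`. -/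
noncomputable def mapFrac (I : Ideal R) (a b : R) :
    FractionRing R →+* FractionRing (RIab R I a b) :=
  IsLocalization.map (T := nonZeroDivisors (RIab R I a b)) _
    (algebraMap R (RIab R I a b)) (fun _ hu => algebraMap_mem_nonZeroDivisors hu)

/-- The element `t ∈ Q(R(I)_{a,b})`, realized as `(0 + i₀ t)/i₀` for a regular
element `i₀ ∈ I`. -/
noncomputable def tau (I : Ideal R) (a b : R) (i₀ : R) (h : i₀ ∈ I)
    (hreg : i₀ ∈ nonZeroDivisors R) : FractionRing (RIab R I a b) :=
  IsLocalization.mk' _ (⟨0, i₀, h⟩ : RIab R I a b)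
    (⟨algebraMap R (RIab R I a b) i₀, algebraMap_mem_nonZeroDivisors hreg⟩ :
      nonZeroDivisors (RIab R I a b))

end RIab

/-! ### Commutative-algebra notions used in the paper -/

instance (priority := 10) factMaximalIdealNeTop (R : Type u) [CommRing R] [IsLocalRing R] :
    Fact (maximalIdeal R ≠ ⊤) := ⟨(maximalIdeal.isMaximal R).ne_top⟩

instance quotientIsLocalRing (R : Type u) [CommRing R] [IsLocalRing R] (I : Ideal R)
    [hI : Fact (I ≠ ⊤)] : IsLocalRing (R ⧸ I) :=
  have : Nontrivial (R ⧸ I) := Ideal.Quotient.nontrivial_iff.mpr hI.out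
  IsLocalRing.of_surjective' (Ideal.Quotient.mk I) Ideal.Quotient.mk_surjective

section CA

variable (R : Type u) [CommRing R]

/-- The length `λ_R(M)` of an `R`-module, as the Krull dimension of its submodule lattice. -/
noncomputable def modLength (M : Type*) [AddCommGroup M] [Module R M] : ℕ∞ :=
  WithBot.unbotD 0 (Order.krullDim (Submodule R M))

/-- `λ_R(A / B)` (more precisely `λ_R(A/(A ∩ B))`) for submodules `A B` of a module. -/
noncomputable def subquotLength {M : Type*} [AddCommGroup M] [Module R M]
    (A B : Submodule R M) : ℕ∞ :=
  modLength R (↥A ⧸ (Submodule.comap A.subtype B))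

/-- The depth of a module over a local ring: the supremum of the lengths of (weakly)
regular sequences contained in the maximal ideal. -/
noncomputable def moduleDepth [IsLocalRing R] (M : Type*) [AddCommGroup M] [Module R M] : ℕ∞ :=
  sSup {n : ℕ∞ | ∃ rs : List R, (∀ x ∈ rs, x ∈ maximalIdeal R) ∧
    RingTheory.Sequence.IsWeaklyRegular M rs ∧ (rs.length : ℕ∞) = n}

/-- A local ring is Cohen-Macaulay if its depth equals its Krull dimension. -/
def IsCohenMacaulayLocalRing [IsLocalRing R] : Prop :=
  (moduleDepth R R : WithBot ℕ∞) = ringKrullDim R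

/-- A maximal Cohen-Macaulay module: finitely generated with depth equal to `dim R`. -/
def IsMaximalCohenMacaulay [IsLocalRing R] (M : Type*) [AddCommGroup M] [Module R M] : Prop :=
  Module.Finite R M ∧ (moduleDepth R M : WithBot ℕ∞) = ringKrullDim R

/-- A Cohen-Macaulay module: finitely generated with depth equal to its dimension
`dim (R / ann M)`. -/
def IsCohenMacaulayModule [IsLocalRing R] (M : Type*) [AddCommGroup M] [Module R M] : Prop :=
  Module.Finite R M ∧
    (moduleDepth R M : WithBot ℕ∞) = ringKrullDim (R ⧸ Module.annihilator R M)

/-- The Krull dimension of a ring as a natural number. -/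
noncomputable def krullDimNat : ℕ := ENat.toNat (WithBot.unbotD 0 (ringKrullDim R))

open CategoryTheory in
/-- `Ext^n_R(k, M)` where `k` is the residue field of the local ring `R`. -/
noncomputable def extResidue [IsLocalRing R] (M : Type u) [AddCommGroup M] [Module R M]
    (n : ℕ) : ModuleCat R :=
  ((Ext R (ModuleCat.{u} R) n).obj
    (Opposite.op (ModuleCat.of R (ResidueField R)))).obj (ModuleCat.of R M)

/-- The Cohen-Macaulay type `t(R) = dim_k Ext^d_R(k, R)` of a local ring of dimension `d`. -/
noncomputable def CMtype [IsLocalRing R] : ℕ∞ :=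
  modLength R (extResidue R R (krullDimNat R))

/-- A canonical module of a local ring: a finitely generated module `W` with
`dim_k Ext^i_R(k, W) = δ_{i, dim R}`. -/
def IsCanonicalModule [IsLocalRing R] (W : Type u) [AddCommGroup W] [Module R W] : Prop :=
  Module.Finite R W ∧ ∀ n : ℕ,
    modLength R (extResidue R W n) = if n = krullDimNat R then 1 else 0

/-- A Gorenstein local ring: Cohen-Macaulay of type one. -/
def IsGorensteinLocalRing [IsLocalRing R] : Prop :=
  IsCohenMacaulayLocalRing R ∧ CMtype R = 1

/-- A regular local ring: Noetherian and the maximal ideal is generated by `dim R`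
elements. -/
def IsRegularLocalRing' [IsLocalRing R] : Prop :=
  IsNoetherianRing R ∧ ∃ s : Finset R,
    Ideal.span (s : Set R) = maximalIdeal R ∧ (s.card : WithBot ℕ∞) = ringKrullDim R

/-- A complete intersection: the completion is a regular local ring modulo an ideal
generated by a regular sequence. -/
def IsCompleteIntersectionLocalRing [IsLocalRing R] : Prop :=
  ∃ (T : Type u) (_ : CommRing T) (_ : IsLocalRing T),
    IsRegularLocalRing' T ∧ ∃ rs : List T, RingTheory.Sequence.IsRegular T rs ∧
      Nonempty ((AdicCompletion (maximalIdeal R) R) ≃+* (T ⧸ Ideal.ofList rs))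

/-- The colon `(A : B) = {q ∈ Q | qB ⊆ A}` of two `R`-submodules of an `R`-algebra `Q`. -/
def qcolon {Q : Type*} [CommRing Q] [Algebra R Q] (A B : Submodule R Q) : Submodule R Q where
  carrier := {q | ∀ x ∈ B, q * x ∈ A}
  add_mem' := fun {p q} hp hq x hx => by
    rw [add_mul]; exact A.add_mem (hp x hx) (hq x hx)
  zero_mem' := fun x hx => by rw [zero_mul]; exact A.zero_mem
  smul_mem' := fun c q hq x hx => by
    rw [Algebra.smul_mul_assoc]; exact A.smul_mem c (hq x hx)

/-- The image of an ideal in the total ring of fractions, as an `R`-submodule. -/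
noncomputable def idealToFrac (J : Ideal R) : Submodule R (FractionRing R) :=
  Submodule.map (Algebra.linearMap R (FractionRing R)) J

/-- `z R` is a (minimal, i.e. principal) reduction of the fractional ideal `H`:
`z ∈ H` and `H^{n+1} = z H^n` for some `n`. -/
def IsPrincipalReduction {Q : Type*} [CommRing Q] [Algebra R Q] (z : Q)
    (H : Submodule R Q) : Prop :=
  z ∈ H ∧ ∃ n : ℕ, H ^ (n + 1) = Submodule.span R {z} * H ^ n

/-- A one-dimensional local Cohen-Macaulay ring is almost Gorenstein if it has a canonical
module which is a fractional ideal `ω` with `R ⊆ ω ⊆ (m : m)`. -/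
def IsAlmostGorensteinOneDim (S : Type u) [CommRing S] [IsLocalRing S] : Prop :=
  ∃ W : Submodule S (FractionRing S), IsFractional (nonZeroDivisors S) W ∧
    IsCanonicalModule S ↥W ∧ (1 : FractionRing S) ∈ W ∧
    W * (Submodule.map (Algebra.linearMap S (FractionRing S)) (maximalIdeal S)) ≤
      Submodule.map (Algebra.linearMap S (FractionRing S)) (maximalIdeal S)

open Filter in
/-- The Hilbert-Samuel multiplicity `e⁰_m(C)` of a module `C` over a local ring,
defined as `lim_t d! · λ(C/m^t C) / t^d` where `d = dim C`. -/
noncomputable def hsMultiplicity (S : Type u) [CommRing S] [IsLocalRing S]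
    (C : Type*) [AddCommGroup C] [Module S C] : ℝ :=
  limUnder atTop (fun t : ℕ =>
    ((Nat.factorial (krullDimNat (S ⧸ Module.annihilator S C)) *
        (modLength S (C ⧸ ((maximalIdeal S ^ t) • (⊤ : Submodule S C)))).toNat : ℕ) : ℝ) /
      (t : ℝ) ^ (krullDimNat (S ⧸ Module.annihilator S C)))

/-- The minimal number of generators `μ(C) = λ(C / m C)` of a module over a local ring. -/
noncomputable def muGen (S : Type u) [CommRing S] [IsLocalRing S]
    (C : Type*) [AddCommGroup C] [Module S C] : ℕ∞ :=
  modLength S (C ⧸ ((maximalIdeal S) • (⊤ : Submodule S C)))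

/-- A Cohen-Macaulay local ring possessing a canonical module is almost Gorenstein if there
is an exact sequence `0 → S → ω_S → C → 0` with `μ(C) = e⁰_m(C)` (Goto-Takahashi-Taniguchi). -/
def IsAlmostGorensteinLocalRing (S : Type u) [CommRing S] [IsLocalRing S] : Prop :=
  ∃ W : ModuleCat.{u} S, IsCanonicalModule S W ∧
    ∃ f : S →ₗ[S] W, Function.Injective f ∧
      ∃ m : ℕ, muGen S (W ⧸ LinearMap.range f) = m ∧
        (m : ℝ) = hsMultiplicity S (W ⧸ LinearMap.range f)

/-- The height of an ideal: the infimum of the heights of the primes containing it. -/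
noncomputable def idealHeight (J : Ideal R) : ℕ∞ :=
  ⨅ (p : PrimeSpectrum R) (_ : J ≤ p.asIdeal), Order.height p

end CA


section Part1

open IsLocalRing

variable {R : Type u} [CommRing R] [IsLocalRing R] {I : Ideal R} [Fact (I ≠ ⊤)] {a b : R}

namespace RIab

@[simp] lemma C_r (c : R) : (C c : RIab R I a b).r = c := rfl
@[simp] lemma C_i (c : R) : (C c : RIab R I a b).i = 0 := rfl

/-- An ideal of `RIab` built from a pair of ideals of `R`. -/
def pairIdeal (J K : Ideal R) (hK : K ≤ I) (h1 : I * K ≤ J) (h2 : J * I ≤ K) :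
    Ideal (RIab R I a b) where
  carrier := {x | x.r ∈ J ∧ x.i ∈ K}
  zero_mem' := ⟨J.zero_mem, K.zero_mem⟩
  add_mem' := fun hx hy => ⟨J.add_mem hx.1 hy.1, K.add_mem hx.2 hy.2⟩
  smul_mem' := fun s x hx => by
    refine ⟨J.sub_mem (J.mul_mem_left _ hx.1) ?_, K.sub_mem (K.add_mem ?_ ?_) ?_⟩
    · exact J.mul_mem_left b (h1 (Ideal.mul_mem_mul s.hi hx.2))
    · exact K.mul_mem_left _ hx.2
    · exact h2 (Ideal.mul_mem_mul hx.1 s.hi)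
    · exact K.mul_mem_left _ (K.mul_mem_left _ hx.2)

lemma C_mem_pow {n : ℕ} {c : R} (hc : c ∈ (maximalIdeal R) ^ n) :
    (C c : RIab R I a b) ∈ (maximalIdeal (RIab R I a b)) ^ n := by
  have h : (maximalIdeal R).map (C (I := I) (a := a) (b := b)) ≤ maximalIdeal (RIab R I a b) := by
    rw [Ideal.map_le_iff_le_comap]
    intro x hx
    rw [Ideal.mem_comap, mem_maximalIdeal_iff]
    exact hx
  have := Ideal.mem_map_of_mem (C (I := I) (a := a) (b := b)) hc
  rw [Ideal.map_pow] at this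
  exact Ideal.pow_right_mono h n this

lemma it_mem_pow_succ {n : ℕ} {i : R} (hi : i ∈ (maximalIdeal R) ^ n * I) (hi' : i ∈ I) :
    (⟨0, i, hi'⟩ : RIab R I a b) ∈ (maximalIdeal (RIab R I a b)) ^ (n + 1) := by
  suffices h : ∃ h' : i ∈ I, (⟨0, i, h'⟩ : RIab R I a b) ∈ (maximalIdeal (RIab R I a b)) ^ (n + 1) by
    obtain ⟨h', hm⟩ := h
    exact hm
  refine Submodule.mul_induction_on hi ?_ ?_
  · intro c hc j hj
    refine ⟨I.mul_mem_left _ hj, ?_⟩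
    · have key : (⟨0, c * j, I.mul_mem_left c hj⟩ : RIab R I a b) =
          C c * ⟨0, j, hj⟩ := by ext <;> simp
      rw [key, pow_succ]
      refine Ideal.mul_mem_mul (C_mem_pow hc) ?_
      rw [mem_maximalIdeal_iff]
      exact (maximalIdeal R).zero_mem
  · rintro x y ⟨hx', hx⟩ ⟨hy', hy⟩
    refine ⟨I.add_mem hx' hy', ?_⟩
    have : (⟨0, x + y, I.add_mem hx' hy'⟩ : RIab R I a b) = ⟨0, x, hx'⟩ + ⟨0, y, hy'⟩ := by
      ext <;> simp
    rw [this]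
    exact Ideal.add_mem _ hx hy

/-- Part 1 core: `M^(n+1) = m^(n+1) ⊕ m^n I`. -/
lemma mem_maximalIdeal_pow_succ_iff (n : ℕ) (x : RIab R I a b) :
    x ∈ (maximalIdeal (RIab R I a b)) ^ (n + 1) ↔
      x.r ∈ (maximalIdeal R) ^ (n + 1) ∧ x.i ∈ (maximalIdeal R) ^ n * I := by
  have hIm : I ≤ maximalIdeal R := le_maximalIdeal Fact.out
  induction n generalizing x with
  | zero =>
    rw [zero_add, pow_one, pow_one, pow_zero, one_mul, mem_maximalIdeal_iff]
    exact ⟨fun h => ⟨h, x.hi⟩, fun h => h.1⟩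
  | succ n ih =>
    constructor
    · intro hx
      set m := maximalIdeal R
      have hK : m ^ (n + 1) * I ≤ I := Ideal.mul_le_right
      have h1 : I * (m ^ (n + 1) * I) ≤ m ^ (n + 2) := by
        calc I * (m ^ (n + 1) * I) ≤ m * (m ^ (n + 1) * m) :=
              Ideal.mul_mono hIm (Ideal.mul_mono le_rfl hIm)
        _ = m ^ (n + 2) * m := by rw [mul_comm, ← pow_succ]
        _ ≤ m ^ (n + 2) := Ideal.mul_le_left
      have h2 : m ^ (n + 2) * I ≤ m ^ (n + 1) * I :=
        Ideal.mul_mono (Ideal.pow_le_pow_right (by omega)) le_rfl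
      have hle : (maximalIdeal (RIab R I a b)) ^ (n + 2) ≤
          pairIdeal (a := a) (b := b) (m ^ (n + 2)) (m ^ (n + 1) * I) hK h1 h2 := by
        rw [pow_succ]
        refine Ideal.mul_le.mpr fun y hy z hz => ?_
        obtain ⟨hyr, hyi⟩ := (ih y).mp hy
        have hzr : z.r ∈ m := (mem_maximalIdeal_iff z).mp hz
        constructor
        · show y.r * z.r - b * (y.i * z.i) ∈ m ^ (n + 2)
          refine Ideal.sub_mem _ ?_ (Ideal.mul_mem_left _ _ ?_)
          · rw [pow_succ]; exact Ideal.mul_mem_mul hyr hzr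
          · have : y.i * z.i ∈ (m ^ n * I) * I := Ideal.mul_mem_mul hyi z.hi
            have hle2 : (m ^ n * I) * I ≤ m ^ (n + 2) := by
              calc (m ^ n * I) * I ≤ (m ^ n * m) * m :=
                    Ideal.mul_mono (Ideal.mul_mono le_rfl hIm) hIm
              _ = m ^ (n + 2) := by rw [← pow_succ, ← pow_succ]
            exact hle2 this
        · show y.r * z.i + z.r * y.i - a * (y.i * z.i) ∈ m ^ (n + 1) * I
          refine Ideal.sub_mem _ (Ideal.add_mem _ ?_ ?_) (Ideal.mul_mem_left _ _ ?_)
          · exact Ideal.mul_mem_mul hyr z.hi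
          · have : z.r * y.i ∈ m * (m ^ n * I) := Ideal.mul_mem_mul hzr hyi
            rwa [← mul_assoc, ← pow_succ'] at this
          · have : y.i * z.i ∈ (m ^ n * I) * I := Ideal.mul_mem_mul hyi z.hi
            have hle2 : (m ^ n * I) * I ≤ m ^ (n + 1) * I := by
              calc (m ^ n * I) * I ≤ (m ^ n * m) * I :=
                    Ideal.mul_mono (Ideal.mul_mono le_rfl hIm) le_rfl
              _ = m ^ (n + 1) * I := by rw [← pow_succ]
            exact hle2 this
      exact hle hx
    · rintro ⟨hr, hi⟩
      have hdecomp : x = C x.r + ⟨0, x.i, x.hi⟩ := by ext <;> simp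
      rw [hdecomp]
      exact Ideal.add_mem _ (C_mem_pow hr) (it_mem_pow_succ hi x.hi)

end RIab

end Part1
section Part2

open IsLocalRing

variable {R : Type u} [CommRing R] [IsLocalRing R] {I : Ideal R} [Fact (I ≠ ⊤)] {a b : R}

namespace RIab

lemma smul_r (c : R) (y : RIab R I a b) : (c • y).r = c * y.r := by
  show (C c * y).r = c * y.r
  simp

lemma smul_i (c : R) (y : RIab R I a b) : (c • y).i = c * y.i := by
  show (C c * y).i = c * y.i
  simp

lemma mem_smul_top_iff (J : Ideal R) (x : RIab R I a b) :
    x ∈ J • (⊤ : Submodule R (RIab R I a b)) ↔ x.r ∈ J ∧ x.i ∈ J * I := by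
  constructor
  · intro hx
    refine Submodule.smul_induction_on hx ?_ ?_
    · intro c hc y _
      rw [smul_r, smul_i]
      exact ⟨J.mul_mem_right _ hc, Ideal.mul_mem_mul hc y.hi⟩
    · rintro y z ⟨hy1, hy2⟩ ⟨hz1, hz2⟩
      exact ⟨Ideal.add_mem _ hy1 hz1, Ideal.add_mem _ hy2 hz2⟩
  · rintro ⟨h1, h2⟩
    have hdecomp : x = x.r • (1 : RIab R I a b) + ⟨0, x.i, x.hi⟩ := by
      ext <;> simp [smul_r, smul_i]
    rw [hdecomp]
    refine Submodule.add_mem _ (Submodule.smul_mem_smul h1 Submodule.mem_top) ?_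
    suffices h : ∃ h' : x.i ∈ I,
        (⟨0, x.i, h'⟩ : RIab R I a b) ∈ J • (⊤ : Submodule R (RIab R I a b)) by
      obtain ⟨h', hm⟩ := h
      exact hm
    refine Submodule.mul_induction_on h2 ?_ ?_
    · intro c hc j hj
      refine ⟨I.mul_mem_left _ hj, ?_⟩
      have key : (⟨0, c * j, I.mul_mem_left c hj⟩ : RIab R I a b) = c • ⟨0, j, hj⟩ := by
        ext <;> simp [smul_r, smul_i]
      rw [key]
      exact Submodule.smul_mem_smul hc Submodule.mem_top
    · rintro y z ⟨hy', hy⟩ ⟨hz', hz⟩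
      refine ⟨I.add_mem hy' hz', ?_⟩
      have : (⟨0, y + z, I.add_mem hy' hz'⟩ : RIab R I a b) =
          (⟨0, y, hy'⟩ : RIab R I a b) + ⟨0, z, hz'⟩ := by ext <;> simp
      rw [this]
      exact Submodule.add_mem _ hy hz

end RIab

end Part2
section Part4

open IsLocalRing AdicCompletion

lemma AdicCompletion.transitionMap_mk {A : Type*} [CommRing A] (J : Ideal A) {M : Type*}
    [AddCommGroup M] [Module A M] {m n : ℕ} (hmn : m ≤ n) (x : M) :
    transitionMap J M hmn (Submodule.Quotient.mk x) = Submodule.Quotient.mk x := rfl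

lemma ideal_smul_top_eq {A : Type*} [CommRing A] (J : Ideal A) : (J • ⊤ : Ideal A) = J := by
  ext x; simp

namespace RIab

variable {R : Type u} [CommRing R] [IsLocalRing R] {I : Ideal R} [Fact (I ≠ ⊤)] {a b : R}

lemma sub_r (x y : RIab R I a b) : (x - y).r = x.r - y.r := by
  show (x + -y).r = _
  rw [add_r, neg_r, sub_eq_add_neg]
lemma sub_i (x y : RIab R I a b) : (x - y).i = x.i - y.i := by
  show (x + -y).i = _
  rw [add_i, neg_i, sub_eq_add_neg]

lemma r_mem_of_mem_pow {n : ℕ} {s : RIab R I a b}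
    (hs : s ∈ (maximalIdeal (RIab R I a b)) ^ n) : s.r ∈ (maximalIdeal R) ^ n := by
  cases n with
  | zero => rw [pow_zero, Ideal.one_eq_top]; exact Submodule.mem_top
  | succ k => exact ((mem_maximalIdeal_pow_succ_iff k s).mp hs).1

lemma i_mem_of_mem_pow_succ {n : ℕ} {s : RIab R I a b}
    (hs : s ∈ (maximalIdeal (RIab R I a b)) ^ (n + 1)) :
    s.i ∈ (maximalIdeal R) ^ n * I :=
  ((mem_maximalIdeal_pow_succ_iff n s).mp hs).2

lemma mem_subtype_smul_top_iff (J : Ideal R) (j : ↥I) :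
    j ∈ (J • ⊤ : Submodule R ↥I) ↔ (j : R) ∈ J * I := by
  have h := Submodule.map_smul'' J (⊤ : Submodule R ↥I) I.subtype
  rw [Submodule.map_top, Submodule.range_subtype, Ideal.smul_eq_mul] at h
  constructor
  · intro hj
    have h2 := Submodule.mem_map_of_mem (f := I.subtype) hj
    rwa [h] at h2
  · intro hj
    rw [← h] at hj
    obtain ⟨y, hy, hyj⟩ := Submodule.mem_map.mp hj
    have : y = j := Subtype.ext hyj
    rwa [← this]

variable (a b) in
/-- The level-`n` component map `S/M^n → R/m^n`, `x ↦ x.r`. -/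
def rq (n : ℕ) :
    (RIab R I a b ⧸ ((maximalIdeal (RIab R I a b)) ^ n • ⊤ : Ideal (RIab R I a b))) →
      R ⧸ ((maximalIdeal R) ^ n • ⊤ : Ideal R) :=
  Quotient.lift (fun s : RIab R I a b => Submodule.Quotient.mk s.r) (by
    intro s t hst
    have h : s - t ∈ (maximalIdeal (RIab R I a b)) ^ n • ⊤ :=
      (Submodule.quotientRel_def _).mp hst
    rw [ideal_smul_top_eq] at h
    apply (Submodule.Quotient.eq _).mpr
    rw [ideal_smul_top_eq]
    have := r_mem_of_mem_pow h
    rwa [sub_r] at this)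

@[simp] lemma rq_mk (n : ℕ) (s : RIab R I a b) :
    rq a b n (Submodule.Quotient.mk s) = Submodule.Quotient.mk s.r := rfl

variable (a b) in
/-- The level-`n` component map `S/M^(n+1) → I/m^n I`, `x ↦ x.i`. -/
def iq (n : ℕ) :
    (RIab R I a b ⧸ ((maximalIdeal (RIab R I a b)) ^ (n + 1) • ⊤ : Ideal (RIab R I a b))) →
      (↥I ⧸ ((maximalIdeal R) ^ n • ⊤ : Submodule R ↥I)) :=
  Quotient.lift (fun s : RIab R I a b => Submodule.Quotient.mk ⟨s.i, s.hi⟩) (by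
    intro s t hst
    have h : s - t ∈ (maximalIdeal (RIab R I a b)) ^ (n + 1) • ⊤ :=
      (Submodule.quotientRel_def _).mp hst
    rw [ideal_smul_top_eq] at h
    apply (Submodule.Quotient.eq _).mpr
    rw [mem_subtype_smul_top_iff]
    have := i_mem_of_mem_pow_succ h
    rwa [sub_i] at this)

@[simp] lemma iq_mk (n : ℕ) (s : RIab R I a b) :
    iq a b n (Submodule.Quotient.mk s) = Submodule.Quotient.mk ⟨s.i, s.hi⟩ := rfl

variable (a b) in
/-- The `r`-component of the completion map. -/
def rhat (x : AdicCompletion (maximalIdeal (RIab R I a b)) (RIab R I a b)) :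
    AdicCompletion (maximalIdeal R) R :=
  ⟨fun n => rq a b n (x.val n), by
    intro k n hkn
    obtain ⟨s, hs⟩ := Submodule.Quotient.mk_surjective _ (x.val n)
    have h1 : x.val k = Submodule.Quotient.mk s := by
      rw [← x.property hkn, ← hs, transitionMap_mk]
    show transitionMap (maximalIdeal R) R hkn (rq a b n (x.val n)) = rq a b k (x.val k)
    rw [← hs, h1, rq_mk, rq_mk, transitionMap_mk]⟩

@[simp] lemma rhat_val (x : AdicCompletion (maximalIdeal (RIab R I a b)) (RIab R I a b)) (n : ℕ) :
    (rhat a b x).val n = rq a b n (x.val n) := rfl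

variable (a b) in
/-- The `i`-component of the completion map, valued in the completion of `I`. -/
def ihat (x : AdicCompletion (maximalIdeal (RIab R I a b)) (RIab R I a b)) :
    AdicCompletion (maximalIdeal R) ↥I :=
  ⟨fun n => iq a b n (x.val (n + 1)), by
    intro k n hkn
    obtain ⟨s, hs⟩ := Submodule.Quotient.mk_surjective _ (x.val (n + 1))
    have h1 : x.val (k + 1) = Submodule.Quotient.mk s := by
      rw [← x.property (show k + 1 ≤ n + 1 by omega), ← hs, transitionMap_mk]
    show transitionMap (maximalIdeal R) ↥I hkn (iq a b n (x.val (n + 1))) = iq a b k (x.val (k + 1))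
    rw [← hs, h1, iq_mk, iq_mk, transitionMap_mk]⟩

@[simp] lemma ihat_val (x : AdicCompletion (maximalIdeal (RIab R I a b)) (RIab R I a b)) (n : ℕ) :
    (ihat a b x).val n = iq a b n (x.val (n + 1)) := rfl

end RIab

end Part4
section Part4b

open IsLocalRing AdicCompletion

variable {A : Type u} [CommRing A] (J : Ideal A)
variable {M : Type u} [AddCommGroup M] [Module A M] {N : Type u} [AddCommGroup N] [Module A N]

lemma adicMap_add_apply (f g : M →ₗ[A] N) (x : AdicCompletion J M) :
    AdicCompletion.map J (f + g) x = AdicCompletion.map J f x + AdicCompletion.map J g x := by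
  refine AdicCompletion.induction_on J M x
    (p := fun y => AdicCompletion.map J (f + g) y =
      AdicCompletion.map J f y + AdicCompletion.map J g y) (fun c => ?_)
  show _ = _
  rw [map_mk, map_mk, map_mk, ← map_add]
  exact congrArg _ (AdicCauchySequence.ext (fun n => by simp))

lemma adicMap_smul_apply (c : A) (f : M →ₗ[A] N) (x : AdicCompletion J M) :
    AdicCompletion.map J (c • f) x = c • AdicCompletion.map J f x := by
  refine AdicCompletion.induction_on J M x
    (p := fun y => AdicCompletion.map J (c • f) y = c • AdicCompletion.map J f y) (fun d => ?_)
  show _ = _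
  rw [map_mk, map_mk, ← map_smul]
  exact congrArg _ (AdicCauchySequence.ext (fun n => by simp))

lemma adicMap_sum_apply {ι : Type*} (s : Finset ι) (f : ι → (M →ₗ[A] N))
    (x : AdicCompletion J M) :
    AdicCompletion.map J (∑ j ∈ s, f j) x = ∑ j ∈ s, AdicCompletion.map J (f j) x := by
  classical
  induction s using Finset.induction_on with
  | empty => simp
  | insert _ _ h ih => rw [Finset.sum_insert h, Finset.sum_insert h, adicMap_add_apply, ih]

end Part4b

section Part4c

open IsLocalRing AdicCompletion

namespace RIab

variable {R : Type u} [CommRing R] [IsLocalRing R] {I : Ideal R}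

lemma algebraMap_adic_val (c : R) (n : ℕ) :
    (algebraMap R (AdicCompletion (maximalIdeal R) R) c).val n = Submodule.Quotient.mk c := rfl

lemma iota_val_mk {z : AdicCompletion (maximalIdeal R) ↥I} {n : ℕ} {j : ↥I}
    (h : z.val n = Submodule.Quotient.mk j) :
    (AdicCompletion.map (maximalIdeal R) I.subtype z).val n = Submodule.Quotient.mk (j : R) := by
  rw [map_val_apply, h]
  exact LinearMap.reduceModIdeal_apply _ _ _

variable [IsNoetherianRing R]

lemma iota_injective :
    Function.Injective (AdicCompletion.map (maximalIdeal R) I.subtype) :=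
  AdicCompletion.map_injective _ (Submodule.injective_subtype I)

lemma iota_range :
    LinearMap.range (AdicCompletion.map (maximalIdeal R) I.subtype) =
      I.map (algebraMap R (AdicCompletion (maximalIdeal R) R)) := by
  obtain ⟨k, g, hg⟩ := Submodule.fg_iff_exists_fin_generating_family.mp (IsNoetherian.noetherian I)
  have hgI : ∀ j, g j ∈ I := fun j => by
    rw [← hg]; exact Submodule.subset_span (Set.mem_range_self j)
  set π : (Fin k → R) →ₗ[R] ↥I :=
    LinearMap.codRestrict I (Fintype.linearCombination R g) (fun v => by
      rw [Fintype.linearCombination_apply]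
      exact Submodule.sum_mem _ (fun j _ => I.smul_mem (v j) (hgI j))) with hπdef
  have hπ : Function.Surjective π := by
    intro y
    have hy : (y : R) ∈ Submodule.span R (Set.range g) := by rw [hg]; exact y.2
    obtain ⟨c, hc⟩ := (Submodule.mem_span_range_iff_exists_fun R).mp hy
    refine ⟨c, Subtype.ext ?_⟩
    simpa [hπdef, Fintype.linearCombination_apply] using hc
  apply le_antisymm
  · rintro w ⟨z, rfl⟩
    obtain ⟨w', rfl⟩ := AdicCompletion.map_surjective _ hπ z
    rw [AdicCompletion.map_comp_apply]
    have hσ : I.subtype ∘ₗ π =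
        ∑ j : Fin k, (g j) • (LinearMap.proj j : (Fin k → R) →ₗ[R] R) := by
      refine LinearMap.ext fun v => ?_
      simp only [LinearMap.comp_apply, LinearMap.codRestrict_apply, hπdef,
        Submodule.coe_subtype, Fintype.linearCombination_apply, LinearMap.sum_apply,
        LinearMap.smul_apply, LinearMap.proj_apply, smul_eq_mul]
      exact Finset.sum_congr rfl (fun j _ => mul_comm _ _)
    rw [hσ, adicMap_sum_apply]
    refine Submodule.sum_mem _ (fun j _ => ?_)
    rw [adicMap_smul_apply, Algebra.smul_def]
    exact Ideal.mul_mem_right _ _ (Ideal.mem_map_of_mem _ (hgI j))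
  · refine Ideal.map_le_iff_le_comap.mpr ?_
    intro i hi
    refine Ideal.mem_comap.mpr ?_
    refine ⟨AdicCompletion.of _ _ ⟨i, hi⟩, ?_⟩
    ext n
    have h1 : (AdicCompletion.of (maximalIdeal R) ↥I ⟨i, hi⟩).val n =
        Submodule.Quotient.mk (⟨i, hi⟩ : ↥I) := rfl
    rw [iota_val_mk h1, algebraMap_adic_val]

end RIab

end Part4c
section Part4d

open IsLocalRing AdicCompletion

lemma quot_mk_mul {A : Type u} [CommRing A] (J : Ideal A) (u v : A) :
    (Submodule.Quotient.mk u : A ⧸ J) * Submodule.Quotient.mk v =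
      Submodule.Quotient.mk (u * v) := rfl

lemma adic_mk_val {A : Type u} [CommRing A] (J : Ideal A) {M : Type u} [AddCommGroup M]
    [Module A M] (f : AdicCauchySequence J M) (n : ℕ) :
    (AdicCompletion.mk J M f).val n = Submodule.Quotient.mk (f n) := rfl

namespace RIab

variable {R : Type u} [CommRing R] [IsLocalRing R] [IsNoetherianRing R]
  {I : Ideal R} [Fact (I ≠ ⊤)] {a b : R}

lemma mII_le (k : ℕ) : ((maximalIdeal R) ^ k * I) * I ≤ (maximalIdeal R) ^ (k + 1) := by
  have hIm : I ≤ maximalIdeal R := le_maximalIdeal Fact.out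
  calc ((maximalIdeal R) ^ k * I) * I
      ≤ ((maximalIdeal R) ^ k * maximalIdeal R) * maximalIdeal R :=
        Ideal.mul_mono (Ideal.mul_mono_right hIm) hIm
    _ = (maximalIdeal R) ^ (k + 2) := by rw [← pow_succ, ← pow_succ]
    _ ≤ (maximalIdeal R) ^ (k + 1) := Ideal.pow_le_pow_right (by omega)

lemma cauchy_step (f : AdicCauchySequence (maximalIdeal (RIab R I a b)) (RIab R I a b)) (n : ℕ) :
    f n - f (n + 1) ∈ (maximalIdeal (RIab R I a b)) ^ n := by
  have h := f.property (Nat.le_succ n)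
  rw [SModEq.sub_mem, ideal_smul_top_eq] at h
  exact h

lemma cauchy_r (f : AdicCauchySequence (maximalIdeal (RIab R I a b)) (RIab R I a b)) (n : ℕ) :
    (f n).r - (f (n + 1)).r ∈ (maximalIdeal R) ^ n := by
  have := r_mem_of_mem_pow (cauchy_step f n)
  rwa [sub_r] at this

lemma cauchy_i (f : AdicCauchySequence (maximalIdeal (RIab R I a b)) (RIab R I a b)) (k : ℕ) :
    (f (k + 1)).i - (f (k + 2)).i ∈ (maximalIdeal R) ^ k * I := by
  have := i_mem_of_mem_pow_succ (cauchy_step f (k + 1))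
  rwa [sub_i] at this

/-- The completion comparison map `(R(I)_{a,b})^̂ → R̂(Î)_{â,b̂}`. -/
noncomputable def phi (x : AdicCompletion (maximalIdeal (RIab R I a b)) (RIab R I a b)) :
    RIab (AdicCompletion (maximalIdeal R) R)
      (I.map (algebraMap R (AdicCompletion (maximalIdeal R) R)))
      (algebraMap R (AdicCompletion (maximalIdeal R) R) a)
      (algebraMap R (AdicCompletion (maximalIdeal R) R) b) where
  r := rhat a b x
  i := AdicCompletion.map (maximalIdeal R) I.subtype (ihat a b x)
  hi := by rw [← iota_range]; exact ⟨ihat a b x, rfl⟩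

@[simp] lemma phi_r (x : AdicCompletion (maximalIdeal (RIab R I a b)) (RIab R I a b)) :
    (phi x).r = rhat a b x := rfl

@[simp] lemma phi_i (x : AdicCompletion (maximalIdeal (RIab R I a b)) (RIab R I a b)) :
    (phi x).i = AdicCompletion.map (maximalIdeal R) I.subtype (ihat a b x) := rfl

lemma phi_r_val (f : AdicCauchySequence (maximalIdeal (RIab R I a b)) (RIab R I a b)) (n : ℕ) :
    (phi (AdicCompletion.mk _ _ f)).r.val n = Submodule.Quotient.mk ((f n).r) := rfl

lemma phi_i_val (f : AdicCauchySequence (maximalIdeal (RIab R I a b)) (RIab R I a b)) (n : ℕ) :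
    (phi (AdicCompletion.mk _ _ f)).i.val n = Submodule.Quotient.mk ((f (n + 1)).i) := by
  refine iota_val_mk (j := ⟨(f (n + 1)).i, (f (n + 1)).hi⟩) rfl

lemma ihat_add (x y : AdicCompletion (maximalIdeal (RIab R I a b)) (RIab R I a b)) :
    ihat a b (x + y) = ihat a b x + ihat a b y := by
  refine AdicCompletion.ext fun n => ?_
  obtain ⟨s, hs⟩ := Submodule.Quotient.mk_surjective _ (x.val (n + 1))
  obtain ⟨t, ht⟩ := Submodule.Quotient.mk_surjective _ (y.val (n + 1))
  rw [val_add_apply, ihat_val, ihat_val, ihat_val, val_add_apply, ← hs, ← ht,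
    ← Submodule.Quotient.mk_add, iq_mk, iq_mk, iq_mk, ← Submodule.Quotient.mk_add]
  exact congrArg _ (Subtype.ext (add_i s t))

lemma rhat_add (x y : AdicCompletion (maximalIdeal (RIab R I a b)) (RIab R I a b)) :
    rhat a b (x + y) = rhat a b x + rhat a b y := by
  refine AdicCompletion.ext fun n => ?_
  obtain ⟨s, hs⟩ := Submodule.Quotient.mk_surjective _ (x.val n)
  obtain ⟨t, ht⟩ := Submodule.Quotient.mk_surjective _ (y.val n)
  rw [val_add_apply, rhat_val, rhat_val, rhat_val, val_add_apply, ← hs, ← ht,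
    ← Submodule.Quotient.mk_add, rq_mk, rq_mk, rq_mk, ← Submodule.Quotient.mk_add, add_r]

end RIab

end Part4d
section Part4e

open IsLocalRing AdicCompletion

namespace RIab

variable {R : Type u} [CommRing R] [IsLocalRing R] [IsNoetherianRing R]
  {I : Ideal R} [Fact (I ≠ ⊤)] {a b : R}

lemma phi_add (x y : AdicCompletion (maximalIdeal (RIab R I a b)) (RIab R I a b)) :
    phi (x + y) = phi x + phi y := by
  refine RIab.ext ?_ ?_
  · rw [add_r, phi_r, phi_r, phi_r, rhat_add]
  · rw [add_i, phi_i, phi_i, phi_i, ihat_add, map_add]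

lemma phi_zero : phi (0 : AdicCompletion (maximalIdeal (RIab R I a b)) (RIab R I a b)) = 0 := by
  refine RIab.ext ?_ ?_
  · refine AdicCompletion.ext fun n => ?_
    rw [phi_r, rhat_val, zero_r, val_zero]
    show rq a b n (Submodule.Quotient.mk 0) = Submodule.Quotient.mk 0
    rw [rq_mk, zero_r]
  · rw [zero_i, phi_i]
    have h : ihat a b (0 : AdicCompletion (maximalIdeal (RIab R I a b)) (RIab R I a b)) = 0 := by
      refine AdicCompletion.ext fun n => ?_
      rw [ihat_val, val_zero, val_zero]
      show iq a b n (Submodule.Quotient.mk 0) = 0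
      rw [iq_mk, show (⟨(0 : RIab R I a b).i, (0 : RIab R I a b).hi⟩ : ↥I) = 0 from
        Subtype.ext rfl, Submodule.Quotient.mk_zero]
    rw [h, _root_.map_zero]

lemma phi_one : phi (1 : AdicCompletion (maximalIdeal (RIab R I a b)) (RIab R I a b)) = 1 := by
  refine RIab.ext ?_ ?_
  · refine AdicCompletion.ext fun n => ?_
    rw [phi_r, rhat_val, one_r, val_one]
    show rq a b n (Submodule.Quotient.mk 1) = Submodule.Quotient.mk 1
    rw [rq_mk, one_r]
  · rw [one_i, phi_i]
    have h : ihat a b (1 : AdicCompletion (maximalIdeal (RIab R I a b)) (RIab R I a b)) = 0 := by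
      refine AdicCompletion.ext fun n => ?_
      rw [ihat_val, val_one, val_zero]
      show iq a b n (Submodule.Quotient.mk 1) = 0
      rw [iq_mk, show (⟨(1 : RIab R I a b).i, (1 : RIab R I a b).hi⟩ : ↥I) = 0 from
        Subtype.ext rfl, Submodule.Quotient.mk_zero]
    rw [h, _root_.map_zero]

lemma phi_mul (x y : AdicCompletion (maximalIdeal (RIab R I a b)) (RIab R I a b)) :
    phi (x * y) = phi x * phi y := by
  refine AdicCompletion.induction_on _ _ x
    (p := fun x => phi (x * y) = phi x * phi y) (fun f => ?_)
  refine AdicCompletion.induction_on _ _ y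
    (p := fun y => phi (AdicCompletion.mk _ _ f * y) = phi (AdicCompletion.mk _ _ f) * phi y)
    (fun g => ?_)
  have hmulval : ∀ n, (AdicCompletion.mk _ _ f * AdicCompletion.mk _ _ g).val n =
      Submodule.Quotient.mk (f n * g n) := by
    intro n
    rw [val_mul, adic_mk_val, adic_mk_val, quot_mk_mul]
  refine RIab.ext ?_ ?_
  · refine AdicCompletion.ext fun n => ?_
    have hL : (phi (AdicCompletion.mk _ _ f * AdicCompletion.mk _ _ g)).r.val n =
        Submodule.Quotient.mk ((f n * g n).r) := by
      rw [phi_r, rhat_val, hmulval, rq_mk]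
    have hR : ((phi (AdicCompletion.mk _ _ f) * phi (AdicCompletion.mk _ _ g)).r).val n =
        Submodule.Quotient.mk ((f n).r * (g n).r -
          b * ((f (n + 1)).i * (g (n + 1)).i)) := by
      rw [mul_r, val_sub_apply, val_mul, val_mul, val_mul, phi_r_val, phi_r_val,
        phi_i_val, phi_i_val, algebraMap_adic_val, quot_mk_mul, quot_mk_mul, quot_mk_mul,
        ← Submodule.Quotient.mk_sub]
    rw [hL, hR, Submodule.Quotient.eq, ideal_smul_top_eq]
    cases n with
    | zero => rw [pow_zero, Ideal.one_eq_top]; trivial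
    | succ k =>
      have key : (f (k + 1) * g (k + 1)).r -
          ((f (k + 1)).r * (g (k + 1)).r - b * ((f (k + 2)).i * (g (k + 2)).i)) =
          b * (((f (k + 2)).i - (f (k + 1)).i) * (g (k + 2)).i +
            (f (k + 1)).i * ((g (k + 2)).i - (g (k + 1)).i)) := by
        rw [mul_r]; ring
      rw [key]
      refine Ideal.mul_mem_left _ _ (Ideal.add_mem _ ?_ ?_)
      · have h1 : (f (k + 2)).i - (f (k + 1)).i ∈ (maximalIdeal R) ^ k * I := by
          have := neg_mem (cauchy_i f k)
          rwa [neg_sub] at this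
        exact mII_le k (Ideal.mul_mem_mul h1 (g (k + 2)).hi)
      · have h2 : (g (k + 2)).i - (g (k + 1)).i ∈ (maximalIdeal R) ^ k * I := by
          have := neg_mem (cauchy_i g k)
          rwa [neg_sub] at this
        rw [mul_comm]
        exact mII_le k (Ideal.mul_mem_mul h2 (f (k + 1)).hi)
  · refine AdicCompletion.ext fun n => ?_
    have hL : (phi (AdicCompletion.mk _ _ f * AdicCompletion.mk _ _ g)).i.val n =
        Submodule.Quotient.mk ((f (n + 1) * g (n + 1)).i) := by
      refine iota_val_mk (j := ⟨(f (n + 1) * g (n + 1)).i, (f (n+1) * g (n+1)).hi⟩) ?_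
      rw [ihat_val, hmulval, iq_mk]
    have hR : ((phi (AdicCompletion.mk _ _ f) * phi (AdicCompletion.mk _ _ g)).i).val n =
        Submodule.Quotient.mk ((f n).r * (g (n + 1)).i + (g n).r * (f (n + 1)).i -
          a * ((f (n + 1)).i * (g (n + 1)).i)) := by
      rw [mul_i, val_sub_apply, val_add_apply, val_mul, val_mul, val_mul, val_mul, phi_r_val, phi_r_val,
        phi_i_val, phi_i_val, algebraMap_adic_val, quot_mk_mul, quot_mk_mul, quot_mk_mul,
        quot_mk_mul, ← Submodule.Quotient.mk_add, ← Submodule.Quotient.mk_sub]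
    rw [hL, hR, Submodule.Quotient.eq, ideal_smul_top_eq]
    cases n with
    | zero => rw [pow_zero, Ideal.one_eq_top]; trivial
    | succ k =>
      have key : (f (k + 2) * g (k + 2)).i -
          ((f (k + 1)).r * (g (k + 2)).i + (g (k + 1)).r * (f (k + 2)).i -
            a * ((f (k + 2)).i * (g (k + 2)).i)) =
          ((f (k + 2)).r - (f (k + 1)).r) * (g (k + 2)).i +
            ((g (k + 2)).r - (g (k + 1)).r) * (f (k + 2)).i := by
        rw [mul_i]; ring
      rw [key]
      have h1 : (f (k + 2)).r - (f (k + 1)).r ∈ (maximalIdeal R) ^ (k + 1) := by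
        have := neg_mem (cauchy_r f (k + 1))
        rwa [neg_sub] at this
      have h2 : (g (k + 2)).r - (g (k + 1)).r ∈ (maximalIdeal R) ^ (k + 1) := by
        have := neg_mem (cauchy_r g (k + 1))
        rwa [neg_sub] at this
      exact Ideal.add_mem _ (Ideal.mul_mem_right _ _ h1) (Ideal.mul_mem_right _ _ h2)

/-- `phi` as a ring homomorphism. -/
noncomputable def phiHom :
    AdicCompletion (maximalIdeal (RIab R I a b)) (RIab R I a b) →+*
      RIab (AdicCompletion (maximalIdeal R) R)
        (I.map (algebraMap R (AdicCompletion (maximalIdeal R) R)))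
        (algebraMap R (AdicCompletion (maximalIdeal R) R) a)
        (algebraMap R (AdicCompletion (maximalIdeal R) R) b) where
  toFun := phi
  map_one' := phi_one
  map_mul' := phi_mul
  map_zero' := phi_zero
  map_add' := phi_add

end RIab

end Part4e
section Part4f

open IsLocalRing AdicCompletion

namespace RIab

variable {R : Type u} [CommRing R] [IsLocalRing R] [IsNoetherianRing R]
  {I : Ideal R} [Fact (I ≠ ⊤)] {a b : R}

lemma phi_injective :
    Function.Injective
      (phiHom : AdicCompletion (maximalIdeal (RIab R I a b)) (RIab R I a b) →+* _) := by
  rw [injective_iff_map_eq_zero]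
  intro z hz
  have hr : rhat a b z = 0 := congrArg RIab.r hz
  have hi0 : AdicCompletion.map (maximalIdeal R) I.subtype (ihat a b z) = 0 :=
    congrArg RIab.i hz
  have hi : ihat a b z = 0 := by
    apply iota_injective
    rw [hi0, _root_.map_zero]
  refine AdicCompletion.ext fun n => ?_
  obtain ⟨s, hs⟩ := Submodule.Quotient.mk_surjective _ (z.val n)
  rw [← hs, val_zero_apply, Submodule.Quotient.mk_eq_zero, ideal_smul_top_eq]
  cases n with
  | zero => rw [pow_zero, Ideal.one_eq_top]; trivial
  | succ k =>
    refine (mem_maximalIdeal_pow_succ_iff k s).mpr ⟨?_, ?_⟩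
    · have h1 : rq a b (k + 1) (z.val (k + 1)) = 0 := by
        rw [← rhat_val, hr, val_zero_apply]
      rw [← hs, rq_mk, Submodule.Quotient.mk_eq_zero, ideal_smul_top_eq] at h1
      exact h1
    · have h2 : iq a b k (z.val (k + 1)) = 0 := by
        rw [← ihat_val, hi, val_zero_apply]
      rw [← hs, iq_mk, Submodule.Quotient.mk_eq_zero, mem_subtype_smul_top_iff] at h2
      exact h2

lemma phi_surjective :
    Function.Surjective
      (phiHom : AdicCompletion (maximalIdeal (RIab R I a b)) (RIab R I a b) →+* _) := by
  rintro ⟨rho, w, hw⟩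
  rw [← iota_range] at hw
  obtain ⟨zeta, hzeta⟩ := hw
  obtain ⟨p, rfl⟩ := AdicCompletion.mk_surjective _ _ rho
  obtain ⟨q, rfl⟩ := AdicCompletion.mk_surjective _ _ zeta
  set fs : ℕ → RIab R I a b := fun n => ⟨p n, (q n : R), (q n).2⟩ with hfs
  have hcauchy : ∀ n, fs n ≡ fs (n + 1)
      [SMOD ((maximalIdeal (RIab R I a b)) ^ n • ⊤ : Ideal (RIab R I a b))] := by
    intro n
    rw [SModEq.sub_mem, ideal_smul_top_eq]
    cases n with
    | zero => rw [pow_zero, Ideal.one_eq_top]; trivial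
    | succ k =>
      refine (mem_maximalIdeal_pow_succ_iff k _).mpr ⟨?_, ?_⟩
      · rw [sub_r]
        have h := p.property (Nat.le_succ (k + 1))
        rwa [SModEq.sub_mem, ideal_smul_top_eq] at h
      · rw [sub_i]
        have h := q.property (Nat.le_succ (k + 1))
        rw [SModEq.sub_mem, mem_subtype_smul_top_iff] at h
        have hle : (maximalIdeal R) ^ (k + 1) * I ≤ (maximalIdeal R) ^ k * I :=
          Ideal.mul_mono_left (Ideal.pow_le_pow_right (by omega))
        have := hle h
        simpa using this
  refine ⟨AdicCompletion.mk _ _ (AdicCauchySequence.mk _ _ fs hcauchy), ?_⟩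
  have hihat : ihat a b (AdicCompletion.mk _ _ (AdicCauchySequence.mk _ _ fs hcauchy)) =
      AdicCompletion.mk _ _ q := by
    refine AdicCompletion.ext fun n => ?_
    show iq a b n (Submodule.Quotient.mk (fs (n + 1))) = Submodule.Quotient.mk (q n)
    rw [iq_mk]
    have heq : (⟨(fs (n + 1)).i, (fs (n + 1)).hi⟩ : ↥I) = q (n + 1) := Subtype.ext rfl
    rw [heq]
    have := AdicCauchySequence.mk_eq_mk (Nat.le_succ n) q
    simpa using this
  refine RIab.ext ?_ ?_
  · refine AdicCompletion.ext fun n => rfl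
  · show AdicCompletion.map (maximalIdeal R) I.subtype _ = w
    rw [hihat, hzeta]

end RIab

end Part4f
/-- Remark 1.7.  For `(R,m)` Noetherian local, `M` the maximal ideal of
`R(I)_{a,b}`: `Mⁿ = mⁿ ⊕ mⁿ⁻¹I` for all `n ≥ 1`; consequently the `M`-adic topology on
`R(I)_{a,b}` coincides with the `m`-adic topology of `R(I)_{a,b}` as an `R`-module, and the
`M`-adic completion of `R(I)_{a,b}` is ring-isomorphic to `R̂(Î)_{a,b}` where `Î = I R̂`. -/
theorem stmt6 (R : Type u) [CommRing R] [IsLocalRing R] [IsNoetherianRing R]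
    (I : Ideal R) (hI0 : I ≠ ⊥) [Fact (I ≠ ⊤)] (a b : R) :
    (∀ n : ℕ, 1 ≤ n → ∀ x : RIab R I a b,
      (x ∈ (maximalIdeal (RIab R I a b)) ^ n ↔
        x.r ∈ (maximalIdeal R) ^ n ∧ x.i ∈ (maximalIdeal R) ^ (n - 1) * I)) ∧
    (∀ n : ℕ, ∃ k : ℕ, ∀ x : RIab R I a b,
      x ∈ (maximalIdeal (RIab R I a b)) ^ k →
        x ∈ (maximalIdeal R) ^ n • (⊤ : Submodule R (RIab R I a b))) ∧
    (∀ n : ℕ, ∃ k : ℕ, ∀ x : RIab R I a b,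
      x ∈ (maximalIdeal R) ^ k • (⊤ : Submodule R (RIab R I a b)) →
        x ∈ (maximalIdeal (RIab R I a b)) ^ n) ∧
    Nonempty ((AdicCompletion (maximalIdeal (RIab R I a b)) (RIab R I a b)) ≃+*
      RIab (AdicCompletion (maximalIdeal R) R)
        (I.map (algebraMap R (AdicCompletion (maximalIdeal R) R)))
        (algebraMap R (AdicCompletion (maximalIdeal R) R) a)
        (algebraMap R (AdicCompletion (maximalIdeal R) R) b)) := by
  refine ⟨?_, ?_, ?_, ?_⟩
  · intro n hn x
    have h := RIab.mem_maximalIdeal_pow_succ_iff (a := a) (b := b) (n - 1) x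
    rwa [Nat.sub_add_cancel hn] at h
  · intro n
    refine ⟨n + 1, fun x hx => ?_⟩
    obtain ⟨h1, h2⟩ := (RIab.mem_maximalIdeal_pow_succ_iff n x).mp hx
    exact (RIab.mem_smul_top_iff _ x).mpr ⟨Ideal.pow_le_pow_right (Nat.le_succ n) h1, h2⟩
  · intro n
    refine ⟨n + 1, fun x hx => ?_⟩
    cases n with
    | zero => rw [pow_zero, Ideal.one_eq_top]; trivial
    | succ k =>
      obtain ⟨h1, h2⟩ := (RIab.mem_smul_top_iff _ x).mp hx
      refine (RIab.mem_maximalIdeal_pow_succ_iff k x).mpr ⟨?_, ?_⟩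
      · exact Ideal.pow_le_pow_right (by omega) h1
      · exact Ideal.mul_mono_left (Ideal.pow_le_pow_right (by omega)) h2
  · exact ⟨RingEquiv.ofBijective RIab.phiHom ⟨RIab.phi_injective, RIab.phi_surjective⟩⟩
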